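/- For every natural number m ≥ 1, the central binomial coefficient satisfies the strict two-sided bound (4^m / sqrt(π·m)) · (1 − 1/(8m)) < binom(2m, m) < (4^m / sqrt(π·m)) · (1 − 1/(9m)). -/

import Mathlib

open Real Filter Topology

private lemma aux_choose_sq (m : ℕ) :
    (((2*m).choose m : ℝ))^2 * ((m.factorial : ℝ))^4 = ((2*m).factorial : ℝ)^2 := by
  have h := Nat.choose_mul_factorial_mul_factorial (show m ≤ 2*m by omega)
  have h2 : (2*m - m) = m := by omega
  rw [h2] at h
  have : (((2*m).choose m * m.factorial * m.factorial : ℕ) : ℝ) = ((2*m).factorial : ℝ) := by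
    exact_mod_cast congrArg (Nat.cast : ℕ → ℝ) h
  push_cast at this
  nlinarith [this]

private lemma aux_W_mul_eq (m : ℕ) :
    Real.Wallis.W m * ((((2*m).choose m : ℝ))^2 * (2*(m:ℝ)+1)) = 16^m := by
  rw [Real.Wallis.W_eq_factorial_ratio]
  have hf : ((2*m).factorial : ℝ) ≠ 0 := by positivity
  have hc := aux_choose_sq m
  field_simp
  rw [show (2:ℝ)^(4*m) = 16^m by rw [pow_mul]; norm_num]
  linear_combination (16^m) * hc

private lemma aux_tendsto_f :
    Filter.Tendsto (fun m : ℕ => (((2*m).choose m : ℝ))^2 * π * m / 16^m)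
    atTop (𝓝 1) := by
  have hW := Real.Wallis.tendsto_W_nhds_pi_div_two
  have h1 : Filter.Tendsto (fun m : ℕ => (2 + 1/(m:ℝ)) * Real.Wallis.W m) atTop (𝓝 π) := by
    have := (tendsto_const_nhds (x := (2:ℝ)) (f := atTop (α := ℕ))).add
      tendsto_one_div_atTop_nhds_zero_nat
    have h2 := this.mul hW
    have h3 : (2:ℝ) * (π/2) = π := by ring
    rw [show (2:ℝ) + 0 = 2 by ring] at h2
    simpa [h3] using h2
  have h2 : Filter.Tendsto (fun m : ℕ => π / ((2 + 1/(m:ℝ)) * Real.Wallis.W m)) atTop (𝓝 1) := by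
    have := (tendsto_const_nhds (x := π) (f := atTop (α := ℕ))).div h1 Real.pi_ne_zero
    simpa [div_self Real.pi_ne_zero, Pi.div_def] using this
  refine h2.congr' ?_
  filter_upwards [Filter.eventually_ge_atTop 1] with m hm
  have hm0 : (m:ℝ) ≠ 0 := by
    have : (1:ℝ) ≤ (m:ℝ) := by exact_mod_cast hm
    positivity
  have hW0 : Real.Wallis.W m ≠ 0 := ne_of_gt (Real.Wallis.W_pos m)
  have key := aux_W_mul_eq m
  have h16 : (16:ℝ)^m ≠ 0 := by positivity
  rw [div_eq_div_iff (by positivity) h16, ← key]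
  field_simp

private lemma aux_stepL (x C C' P q : ℝ) (hx : 1 ≤ x) (hC : 0 < C) (hP : 0 < P) (hq : 0 < q)
    (hrec : (x+1)*C' = 2*(2*x+1)*C) :
    C'^2 * q * (x+1) * (8*(x+1))^2 / ((16*P) * (8*(x+1)-1)^2)
      < C^2 * q * x * (8*x)^2 / (P * (8*x-1)^2) := by
  have hx1 : (0:ℝ) < x + 1 := by linarith
  have hC' : C' = 2*(2*x+1)*C/(x+1) := by
    field_simp
    linarith [hrec]
  subst hC'
  have h81 : (0:ℝ) < 8*x - 1 := by linarith
  have h87 : (0:ℝ) < 8*(x+1) - 1 := by linarith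
  rw [div_lt_div_iff₀ (by positivity) (by positivity)]
  have key : (x+1) * ((2*x+1)^2*(x+1)*(8*x-1)^2) < (x+1) * (4*x^3*(8*x+7)^2) := by
    nlinarith [sq_nonneg x, sq_nonneg (x-1)]
  have hpos : (0:ℝ) < C^2 * q * P * 1024 := by positivity
  have H := mul_lt_mul_of_pos_left key hpos
  field_simp
  nlinarith [sq_nonneg x, sq_nonneg (x-1), H]

private lemma aux_stepU (x C C' P q : ℝ) (hx : 2 ≤ x) (hC : 0 < C) (hP : 0 < P) (hq : 0 < q)
    (hrec : (x+1)*C' = 2*(2*x+1)*C) :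
    C^2 * q * x * (9*x)^2 / (P * (9*x-1)^2)
      < C'^2 * q * (x+1) * (9*(x+1))^2 / ((16*P) * (9*(x+1)-1)^2) := by
  have hx1 : (0:ℝ) < x + 1 := by linarith
  have hC' : C' = 2*(2*x+1)*C/(x+1) := by
    field_simp
    linarith [hrec]
  subst hC'
  have h91 : (0:ℝ) < 9*x - 1 := by linarith
  have h98 : (0:ℝ) < 9*(x+1) - 1 := by linarith
  rw [div_lt_div_iff₀ (by positivity) (by positivity)]
  have key : (x+1) * (4*x^3*(9*x+8)^2) < (x+1) * ((2*x+1)^2*(x+1)*(9*x-1)^2) := by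
    nlinarith [sq_nonneg x, sq_nonneg (x-2)]
  have hpos : (0:ℝ) < C^2 * q * P * 81 := by positivity
  have H := mul_lt_mul_of_pos_left key hpos
  rw [div_pow, div_mul_eq_mul_div, div_mul_eq_mul_div, div_mul_eq_mul_div,
    div_mul_eq_mul_div, lt_div_iff₀ (by positivity)]
  nlinarith [H]

noncomputable def gseq (m : ℕ) : ℝ :=
  ((2*m).choose m : ℝ)^2 * π * m * (8*(m:ℝ))^2 / (16^m * (8*(m:ℝ)-1)^2)

noncomputable def hseq (m : ℕ) : ℝ :=
  ((2*m).choose m : ℝ)^2 * π * m * (9*(m:ℝ))^2 / (16^m * (9*(m:ℝ)-1)^2)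

private lemma aux_rec_cast (m : ℕ) :
    ((m:ℝ)+1) * ((2*(m+1)).choose (m+1) : ℝ) = 2*(2*(m:ℝ)+1) * ((2*m).choose m : ℝ) := by
  have h := Nat.succ_mul_centralBinom_succ m
  unfold Nat.centralBinom at h
  have : (((m+1) * ((2*(m+1)).choose (m+1)) : ℕ) : ℝ)
      = ((2 * (2*m+1) * ((2*m).choose m) : ℕ) : ℝ) := by
    exact_mod_cast congrArg (Nat.cast : ℕ → ℝ) h
  push_cast at this
  linarith [this]

private lemma aux_choose_pos (m : ℕ) : (0:ℝ) < ((2*m).choose m : ℝ) := by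
  exact_mod_cast Nat.choose_pos (by omega)

private lemma gseq_step (m : ℕ) (hm : 1 ≤ m) : gseq (m+1) < gseq m := by
  have h := aux_stepL (m:ℝ) ((2*m).choose m : ℝ) ((2*(m+1)).choose (m+1) : ℝ) (16^m) π
    (by exact_mod_cast hm) (aux_choose_pos m) (by positivity) Real.pi_pos (aux_rec_cast m)
  have e1 : gseq (m+1) = ((2*(m+1)).choose (m+1) : ℝ)^2 * π * ((m:ℝ)+1) * (8*((m:ℝ)+1))^2
      / ((16*16^m) * (8*((m:ℝ)+1)-1)^2) := by
    unfold gseq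
    rw [pow_succ]
    push_cast
    ring
  rw [e1]
  exact h

private lemma hseq_step (m : ℕ) (hm : 2 ≤ m) : hseq m < hseq (m+1) := by
  have h := aux_stepU (m:ℝ) ((2*m).choose m : ℝ) ((2*(m+1)).choose (m+1) : ℝ) (16^m) π
    (by exact_mod_cast hm) (aux_choose_pos m) (by positivity) Real.pi_pos (aux_rec_cast m)
  have e1 : hseq (m+1) = ((2*(m+1)).choose (m+1) : ℝ)^2 * π * ((m:ℝ)+1) * (9*((m:ℝ)+1))^2
      / ((16*16^m) * (9*((m:ℝ)+1)-1)^2) := by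
    unfold hseq
    rw [pow_succ]
    push_cast
    ring
  rw [e1]
  exact h

private lemma aux_tendsto_g : Filter.Tendsto gseq atTop (𝓝 1) := by
  have t1 : Filter.Tendsto (fun m : ℕ => 8 - 1/(m:ℝ)) atTop (𝓝 8) := by
    have := (tendsto_const_nhds (x := (8:ℝ)) (f := atTop (α := ℕ))).sub
      tendsto_one_div_atTop_nhds_zero_nat
    simpa using this
  have t2 : Filter.Tendsto (fun m : ℕ => ((8:ℝ)/(8 - 1/(m:ℝ)))^2) atTop (𝓝 1) := by
    have := ((tendsto_const_nhds (x := (8:ℝ)) (f := atTop (α := ℕ))).div t1 (by norm_num)).pow 2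
    norm_num at this
    simpa [one_div] using this
  have := aux_tendsto_f.mul t2
  rw [one_mul] at this
  refine this.congr' ?_
  filter_upwards [Filter.eventually_ge_atTop 1] with m hm
  have hm1 : (1:ℝ) ≤ (m:ℝ) := by exact_mod_cast hm
  have hm0 : (m:ℝ) ≠ 0 := by positivity
  have h81 : (8:ℝ)*(m:ℝ) - 1 ≠ 0 := by nlinarith
  have h8m : (8:ℝ) - 1/(m:ℝ) ≠ 0 := by
    have : (8:ℝ) - 1/(m:ℝ) = (8*(m:ℝ)-1)/(m:ℝ) := by field_simp
    rw [this]
    exact div_ne_zero h81 hm0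
  unfold gseq
  have h16 : (16:ℝ)^m ≠ 0 := by positivity
  field_simp

private lemma aux_tendsto_h : Filter.Tendsto hseq atTop (𝓝 1) := by
  have t1 : Filter.Tendsto (fun m : ℕ => 9 - 1/(m:ℝ)) atTop (𝓝 9) := by
    have := (tendsto_const_nhds (x := (9:ℝ)) (f := atTop (α := ℕ))).sub
      tendsto_one_div_atTop_nhds_zero_nat
    simpa using this
  have t2 : Filter.Tendsto (fun m : ℕ => ((9:ℝ)/(9 - 1/(m:ℝ)))^2) atTop (𝓝 1) := by
    have := ((tendsto_const_nhds (x := (9:ℝ)) (f := atTop (α := ℕ))).div t1 (by norm_num)).pow 2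
    norm_num at this
    simpa [one_div] using this
  have := aux_tendsto_f.mul t2
  rw [one_mul] at this
  refine this.congr' ?_
  filter_upwards [Filter.eventually_ge_atTop 1] with m hm
  have hm1 : (1:ℝ) ≤ (m:ℝ) := by exact_mod_cast hm
  have hm0 : (m:ℝ) ≠ 0 := by positivity
  have h91 : (9:ℝ)*(m:ℝ) - 1 ≠ 0 := by nlinarith
  have h9m : (9:ℝ) - 1/(m:ℝ) ≠ 0 := by
    have : (9:ℝ) - 1/(m:ℝ) = (9*(m:ℝ)-1)/(m:ℝ) := by field_simp
    rw [this]
    exact div_ne_zero h91 hm0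
  unfold hseq
  have h16 : (16:ℝ)^m ≠ 0 := by positivity
  field_simp

private lemma gseq_gt_one (m : ℕ) (hm : 1 ≤ m) : 1 < gseq m := by
  have anti : ∀ k, m+1 ≤ k → gseq k ≤ gseq (m+1) := by
    intro k hk
    induction k, hk using Nat.le_induction with
    | base => exact le_refl _
    | succ n hn ih => exact le_trans (le_of_lt (gseq_step n (by omega))) ih
  have h1 : (1:ℝ) ≤ gseq (m+1) :=
    le_of_tendsto aux_tendsto_g (Filter.eventually_atTop.2 ⟨m+1, anti⟩)
  exact lt_of_le_of_lt h1 (gseq_step m hm)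

private lemma hseq_lt_one (m : ℕ) (hm : 1 ≤ m) : hseq m < 1 := by
  rcases Nat.lt_or_ge m 2 with h2 | h2
  · have hm1 : m = 1 := by omega
    subst hm1
    have : ((2*1).choose 1 : ℝ) = 2 := by norm_num
    unfold hseq
    rw [this]
    have hpi := Real.pi_lt_d2
    push_cast
    rw [div_lt_one (by positivity)]
    nlinarith [hpi]
  · have mono : ∀ k, m+1 ≤ k → hseq (m+1) ≤ hseq k := by
      intro k hk
      induction k, hk using Nat.le_induction with
      | base => exact le_refl _
      | succ n hn ih => exact le_trans ih (le_of_lt (hseq_step n (by omega)))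
    have h1 : hseq (m+1) ≤ 1 :=
      ge_of_tendsto aux_tendsto_h (Filter.eventually_atTop.2 ⟨m+1, mono⟩)
    exact lt_of_lt_of_le (hseq_step m h2) h1

theorem stmt_8 (m : ℕ) (hm : 1 ≤ m) :
    (4 ^ m / Real.sqrt (π * m)) * (1 - 1 / (8 * (m : ℝ)))
        < ((2 * m).choose m : ℝ) ∧
      ((2 * m).choose m : ℝ)
        < (4 ^ m / Real.sqrt (π * m)) * (1 - 1 / (9 * (m : ℝ))) := by
  have hm1 : (1:ℝ) ≤ (m:ℝ) := by exact_mod_cast hm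
  have hx0 : (0:ℝ) < (m:ℝ) := by linarith
  have hpim : (0:ℝ) < π * m := by positivity
  have hs : (0:ℝ) < Real.sqrt (π * m) := Real.sqrt_pos.2 hpim
  have hs2 : (Real.sqrt (π * m))^2 = π * m := Real.sq_sqrt (le_of_lt hpim)
  have hC := aux_choose_pos m
  have h16 : (0:ℝ) < 16^m := by positivity
  have hpow : ((4:ℝ)^m)^2 = 16^m := by
    rw [← pow_mul, mul_comm, pow_mul]
    norm_num
  have h8 : (0:ℝ) < 8*(m:ℝ) - 1 := by linarith
  have h9 : (0:ℝ) < 9*(m:ℝ) - 1 := by linarith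
  constructor
  · -- lower bound
    have hg := gseq_gt_one m hm
    unfold gseq at hg
    have hD : (0:ℝ) < 16^m * (8*(m:ℝ)-1)^2 := by positivity
    have hN : 16^m * (8*(m:ℝ)-1)^2
        < ((2*m).choose m : ℝ)^2 * π * m * (8*(m:ℝ))^2 := (one_lt_div hD).mp hg
    have hA : (0:ℝ) ≤ (4 ^ m / Real.sqrt (π * m)) * (1 - 1 / (8 * (m : ℝ))) := by
      have h1 : 1/(8*(m:ℝ)) ≤ 1 := by
        rw [div_le_one (by linarith)]
        linarith
      have h2 : (0:ℝ) ≤ 4^m / Real.sqrt (π * m) := by positivity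
      nlinarith
    refine lt_of_pow_lt_pow_left₀ 2 (le_of_lt hC) ?_
    have e1 : ((4 ^ m / Real.sqrt (π * m)) * (1 - 1 / (8 * (m : ℝ))))^2
        = 16^m * (8*(m:ℝ)-1)^2 / (π * m * (8*(m:ℝ))^2) := by
      rw [mul_pow, div_pow, hs2, hpow]
      rw [show (1 - 1/(8*(m:ℝ)))^2 = (8*(m:ℝ)-1)^2/(8*(m:ℝ))^2 by
        rw [eq_div_iff (by positivity)]; field_simp]
      field_simp
    rw [e1, div_lt_iff₀ (by positivity)]
    nlinarith [hN]
  · -- upper bound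
    have hh := hseq_lt_one m hm
    unfold hseq at hh
    have hD : (0:ℝ) < 16^m * (9*(m:ℝ)-1)^2 := by positivity
    have hN : ((2*m).choose m : ℝ)^2 * π * m * (9*(m:ℝ))^2
        < 16^m * (9*(m:ℝ)-1)^2 := (div_lt_one hD).mp hh
    have hB : (0:ℝ) ≤ (4 ^ m / Real.sqrt (π * m)) * (1 - 1 / (9 * (m : ℝ))) := by
      have h1 : 1/(9*(m:ℝ)) ≤ 1 := by
        rw [div_le_one (by linarith)]
        linarith
      have h2 : (0:ℝ) ≤ 4^m / Real.sqrt (π * m) := by positivity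
      nlinarith
    refine lt_of_pow_lt_pow_left₀ 2 hB ?_
    have e1 : ((4 ^ m / Real.sqrt (π * m)) * (1 - 1 / (9 * (m : ℝ))))^2
        = 16^m * (9*(m:ℝ)-1)^2 / (π * m * (9*(m:ℝ))^2) := by
      rw [mul_pow, div_pow, hs2, hpow]
      rw [show (1 - 1/(9*(m:ℝ)))^2 = (9*(m:ℝ)-1)^2/(9*(m:ℝ))^2 by
        rw [eq_div_iff (by positivity)]; field_simp]
      field_simp
    rw [e1, lt_div_iff₀ (by positivity)]
    nlinarith [hN]
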